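/- Let β > 0, β ≠ 1, μ ≥ 0, and set α = β, σ = 1+2β, λ = (β-1)/(1+2β). Consider the cylindrical system with θ = 0: 0 = (λ-3μ)R + σλR² - ((σ+3)/2)RZ and 0 = -Z - σZ² + 2λσR². Then the solutions with R ≠ 0 are given by R*_± = β/(6(1+β)) - (1+2β)μ/(3(1+β)) ± √((β-1)(2+β)²(8μ² - 1 + β(1-4μ)²)) / (6(β²-1)), and Z*_± = (β-1)/((2+β)(1+2β)) - 3μ/(2+β) + ((β-1)/(2+β))·R*_±, provided the discriminant (β-1)(8μ² - 1 + β(1-4μ)²) ≥ 0. -/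

import Mathlib

/-- For `α = β`, `θ = 0`, the nonzero-`R` fixed points of the cylindrical
system are given by the explicit formulas `R*₊, R*₋, Z*₊, Z*₋`. -/
theorem cylindrical_fixed_points_theta_zero (β μ : ℝ) (hβ : 0 < β)
    (hβ1 : β ≠ 1) (hμ : 0 ≤ μ)
    (hdisc : 0 ≤ (β - 1) * (2 + β) ^ 2 * (8 * μ ^ 2 - 1 + β * (1 - 4 * μ) ^ 2))
    (R Z : ℝ) (hR : R ≠ 0)
    (h1 : (((β - 1) / (1 + 2 * β)) - 3 * μ) * R
        + (1 + 2 * β) * ((β - 1) / (1 + 2 * β)) * R ^ 2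
        - (((1 + 2 * β) + 3) / 2) * R * Z = 0)
    (h2 : -Z - (1 + 2 * β) * Z ^ 2
        + 2 * ((β - 1) / (1 + 2 * β)) * (1 + 2 * β) * R ^ 2 = 0) :
    let Rp : ℝ := β / (6 * (1 + β)) - (1 + 2 * β) * μ / (3 * (1 + β))
      + Real.sqrt ((β - 1) * (2 + β) ^ 2 * (8 * μ ^ 2 - 1 + β * (1 - 4 * μ) ^ 2))
        / (6 * (β ^ 2 - 1))
    let Rm : ℝ := β / (6 * (1 + β)) - (1 + 2 * β) * μ / (3 * (1 + β))
      - Real.sqrt ((β - 1) * (2 + β) ^ 2 * (8 * μ ^ 2 - 1 + β * (1 - 4 * μ) ^ 2))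
        / (6 * (β ^ 2 - 1))
    let Zp : ℝ := (β - 1) / ((2 + β) * (1 + 2 * β)) - 3 * μ / (2 + β)
      + ((β - 1) / (2 + β)) * Rp
    let Zm : ℝ := (β - 1) / ((2 + β) * (1 + 2 * β)) - 3 * μ / (2 + β)
      + ((β - 1) / (2 + β)) * Rm
    ((R = Rp ∧ Z = Zp) ∨ (R = Rm ∧ Z = Zm)) := by
  intro Rp Rm Zp Zm
  have hσ : (1 : ℝ) + 2 * β ≠ 0 := by positivity
  have h2β : (2 : ℝ) + β ≠ 0 := by positivity
  have h1β : (1 : ℝ) + β ≠ 0 := by positivity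
  have hβm : β - 1 ≠ 0 := sub_ne_zero.mpr hβ1
  have hβ2 : β ^ 2 - 1 ≠ 0 := by
    intro h; apply hβm; nlinarith
  set s : ℝ := Real.sqrt ((β - 1) * (2 + β) ^ 2 * (8 * μ ^ 2 - 1 + β * (1 - 4 * μ) ^ 2))
    with hs_def
  have hs : s ^ 2 = (β - 1) * (2 + β) ^ 2 * (8 * μ ^ 2 - 1 + β * (1 - 4 * μ) ^ 2) :=
    Real.sq_sqrt hdisc
  field_simp at h1 h2
  have hlin : R * ((β - 1) - 3 * (1 + 2 * β) * μ + (β - 1) * (1 + 2 * β) * R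
      - (2 + β) * (1 + 2 * β) * Z) = 0 := by linear_combination h1 / 2
  have hlin2 : (β - 1) - 3 * (1 + 2 * β) * μ + (β - 1) * (1 + 2 * β) * R
      - (2 + β) * (1 + 2 * β) * Z = 0 := (mul_eq_zero.mp hlin).resolve_left hR
  have hq' : (1 + 2 * β) ^ 2 * (9 * (β ^ 2 - 1) * R ^ 2
      - 3 * (β - 1) * (β - 2 * (1 + 2 * β) * μ) * R
      - (β - 1 - 3 * (1 + 2 * β) * μ) * (1 - 3 * μ)) = 0 := by
    linear_combination ((2 + β) * (1 + 2 * β)) ^ 2 * h2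
      - ((2 + β) * (1 + 2 * β) + (1 + 2 * β) * ((β - 1) - 3 * (1 + 2 * β) * μ
        + (β - 1) * (1 + 2 * β) * R) + (1 + 2 * β) * (2 + β) * (1 + 2 * β) * Z) * hlin2
  have hq : 9 * (β ^ 2 - 1) * R ^ 2
      - 3 * (β - 1) * (β - 2 * (1 + 2 * β) * μ) * R
      - (β - 1 - 3 * (1 + 2 * β) * μ) * (1 - 3 * μ) = 0 :=
    (mul_eq_zero.mp hq').resolve_left (pow_ne_zero _ hσ)
  have hfact : (6 * (β ^ 2 - 1) * R - (β - 1) * (β - 2 * (1 + 2 * β) * μ) - s)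
      * (6 * (β ^ 2 - 1) * R - (β - 1) * (β - 2 * (1 + 2 * β) * μ) + s) = 0 := by
    linear_combination 4 * (β ^ 2 - 1) * hq - hs
  have hZ : Z = (β - 1) / ((2 + β) * (1 + 2 * β)) - 3 * μ / (2 + β)
      + ((β - 1) / (2 + β)) * R := by
    field_simp
    linear_combination (-1) * hlin2
  rcases mul_eq_zero.mp hfact with hx | hx
  · left
    have hRp : R = Rp := by
      show R = β / (6 * (1 + β)) - (1 + 2 * β) * μ / (3 * (1 + β)) + s / (6 * (β ^ 2 - 1))
      field_simp
      linear_combination 3 * (1 + β) * hx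
    refine ⟨hRp, ?_⟩
    rw [hZ, hRp]
  · right
    have hRm : R = Rm := by
      show R = β / (6 * (1 + β)) - (1 + 2 * β) * μ / (3 * (1 + β)) - s / (6 * (β ^ 2 - 1))
      field_simp
      linear_combination 3 * (1 + β) * hx
    refine ⟨hRm, ?_⟩
    rw [hZ, hRm]
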